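/- There exists a constant λ₂ > 1 such that the following holds. Let n ≥ 2 and let m ≥ 1 be an integer with m ≤ n / (4 log n). Let ξ₁, …, ξₙ be i.i.d. uniform random variables on [0,1], let I_j = [(j−1)/m, j/m) for j = 1, …, m, and let s_j = #{k : ξ_k ∈ I_j}. Then with λ₁ = 1 − 1/√2, P( λ₁ n / m ≤ s_j ≤ λ₂ n / m for all j = 1, …, m ) > 0. -/

import Mathlib

open MeasureTheory Finset

/-- The uniform distribution on `[0,1]`. -/
noncomputable def unifMeasure : Measure ℝ := volume.restrict (Set.Icc (0:ℝ) 1)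

/-- Two bins `[a/m,(a+1)/m)` and `[b/m,(b+1)/m)` intersect only if `a = b`. -/
lemma bins_disjoint_aux {m a b : ℕ} {x : ℝ} (hm : (0:ℝ) < m)
    (ha : x ∈ Set.Ico ((a:ℝ)/m) (((a:ℝ)+1)/m))
    (hb : x ∈ Set.Ico ((b:ℝ)/m) (((b:ℝ)+1)/m)) : a = b := by
  rcases lt_trichotomy a b with h | h | h
  · exfalso
    have h1 : ((a:ℝ)+1) ≤ (b:ℝ) := by exact_mod_cast h
    have h2 : ((a:ℝ)+1)/m ≤ (b:ℝ)/m := by gcongr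
    have := ha.2; have := hb.1; linarith
  · exact h
  · exfalso
    have h1 : ((b:ℝ)+1) ≤ (a:ℝ) := by exact_mod_cast h
    have h2 : ((b:ℝ)+1)/m ≤ (a:ℝ)/m := by gcongr
    have := hb.2; have := ha.1; linarith

/-- Counting residues in a range. -/
lemma card_filter_mod_eq (n m j : ℕ) (hm : 0 < m) (hj : j < m) :
    ((Finset.univ.filter fun k : Fin n => k.val % m = j).card : ℤ)
      = ⌈((n:ℚ) - (j:ℚ)) / (m:ℚ)⌉ := by
  classical
  have h1 : (Finset.univ.filter fun k : Fin n => k.val % m = j).card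
      = ((Finset.range n).filter fun k => k % m = j).card := by
    rw [Finset.card_filter, Finset.card_filter]
    exact Fin.sum_univ_eq_sum_range (fun i => if i % m = j then 1 else 0) n
  have h2 : ((Finset.range n).filter fun k => k % m = j)
      = ((Finset.range n).filter fun k => k ≡ j [MOD m]) := by
    apply Finset.filter_congr
    intro k _
    unfold Nat.ModEq
    rw [Nat.mod_eq_of_lt hj]
  have h3 := Nat.count_modEq_card_eq_ceil n hm j
  rw [Nat.count_eq_card_filter_range] at h3
  rw [h1, h2, h3, Nat.mod_eq_of_lt hj]

/-- There is a constant `λ₂ > 1` such that for all `n ≥ 2` and integers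
`1 ≤ m` with `m ≤ n / (4 log n)`: if `ξ₁, …, ξₙ` are i.i.d. uniform on `[0,1]`
(modeled by the product measure), `I_j = [j/m, (j+1)/m)` for `j = 0, …, m-1`, and
`s_j ξ` is the number of `k` with `ξ k ∈ I_j`, then with `λ₁ = 1 - 1/√2`, the event
`{∀ j, λ₁ n / m ≤ s_j ≤ λ₂ n / m}` has positive probability. -/
theorem bins_two_sided_positive_probability :
    ∃ lam2 : ℝ, 1 < lam2 ∧
      ∀ n m : ℕ, 2 ≤ n → 1 ≤ m → (m : ℝ) ≤ (n : ℝ) / (4 * Real.log n) →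
        0 < (Measure.pi fun _ : Fin n => unifMeasure)
          {ξ : Fin n → ℝ | ∀ j : Fin m,
            (1 - 1 / Real.sqrt 2) * n / m ≤
              (((Finset.univ.filter fun k : Fin n =>
                ξ k ∈ Set.Ico ((j : ℝ) / m) (((j : ℝ) + 1) / m)).card : ℕ) : ℝ) ∧
            (((Finset.univ.filter fun k : Fin n =>
                ξ k ∈ Set.Ico ((j : ℝ) / m) (((j : ℝ) + 1) / m)).card : ℕ) : ℝ)
              ≤ lam2 * n / m} := by
  classical
  refine ⟨2, one_lt_two, ?_⟩
  intro n m hn hm hmn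
  have hm0 : 0 < m := hm
  have hmR : (0:ℝ) < m := by exact_mod_cast hm0
  have hnR : (2:ℝ) ≤ n := by exact_mod_cast hn
  -- u = n / m is large
  set u : ℝ := (n:ℝ) / m with hu_def
  have hlogn : Real.log 2 ≤ Real.log n := Real.log_le_log (by norm_num) hnR
  have hlog2 : (0.6931471803:ℝ) < Real.log 2 := Real.log_two_gt_d9
  have hlognpos : 0 < Real.log n := by linarith
  have hu1 : 4 * Real.log n ≤ u := by
    rw [hu_def, le_div_iff₀ hmR]
    calc 4 * Real.log n * m ≤ 4 * Real.log n * ((n:ℝ) / (4 * Real.log n)) := by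
          have h4 : (0:ℝ) < 4 * Real.log n := by linarith
          exact mul_le_mul_of_nonneg_left hmn (le_of_lt h4)
      _ = n := by field_simp
  have hu2 : (1.5:ℝ) ≤ u := by linarith
  have hsqrt2 : Real.sqrt 2 ≤ 1.5 := by
    nlinarith [Real.sq_sqrt (by norm_num : (2:ℝ) ≥ 0), Real.sqrt_nonneg 2]
  have hsqrt2pos : 0 < Real.sqrt 2 := Real.sqrt_pos.mpr (by norm_num)
  have hinv : (1:ℝ) ≤ 1 / Real.sqrt 2 * u := by
    have h1 : 1 / Real.sqrt 2 * Real.sqrt 2 ≤ 1 / Real.sqrt 2 * u := by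
      apply mul_le_mul_of_nonneg_left (by linarith) (by positivity)
    rw [one_div_mul_cancel (ne_of_gt hsqrt2pos)] at h1
    exact h1
  -- the bin assignment
  set b : Fin n → ℕ := fun k => k.val % m with hb_def
  have hbm : ∀ k, b k < m := fun k => Nat.mod_lt _ hm0
  -- the deterministic box
  set S : Set (Fin n → ℝ) :=
    Set.univ.pi fun k => Set.Ico ((b k : ℝ)/m) (((b k : ℝ)+1)/m) with hS_def
  -- S has positive measure
  have hfac : ∀ a : ℕ, a < m →
      unifMeasure (Set.Ico ((a:ℝ)/m) (((a:ℝ)+1)/m)) = ENNReal.ofReal (1/m) := by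
    intro a ha
    have hsub : Set.Ico ((a:ℝ)/m) (((a:ℝ)+1)/m) ⊆ Set.Icc (0:ℝ) 1 := by
      intro x hx
      constructor
      · exact le_trans (by positivity) hx.1
      · refine le_of_lt (lt_of_lt_of_le hx.2 ?_)
        rw [div_le_one hmR]
        have : (a:ℝ) + 1 ≤ m := by exact_mod_cast ha
        linarith
    rw [unifMeasure, Measure.restrict_apply measurableSet_Ico,
      Set.inter_eq_left.mpr hsub, Real.volume_Ico]
    congr 1
    field_simp
    ring
  haveI : SigmaFinite unifMeasure := by unfold unifMeasure; infer_instance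
  have hSpos : 0 < (Measure.pi fun _ : Fin n => unifMeasure) S := by
    rw [hS_def, Measure.pi_pi]
    rw [CanonicallyOrderedAdd.prod_pos]
    intro k _
    rw [hfac (b k) (hbm k)]
    exact ENNReal.ofReal_pos.mpr (by positivity)
  -- S is contained in the event
  have hsub : S ⊆ {ξ : Fin n → ℝ | ∀ j : Fin m,
      (1 - 1 / Real.sqrt 2) * n / m ≤
        (((Finset.univ.filter fun k : Fin n =>
          ξ k ∈ Set.Ico ((j : ℝ) / m) (((j : ℝ) + 1) / m)).card : ℕ) : ℝ) ∧
      (((Finset.univ.filter fun k : Fin n =>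
          ξ k ∈ Set.Ico ((j : ℝ) / m) (((j : ℝ) + 1) / m)).card : ℕ) : ℝ)
        ≤ 2 * n / m} := by
    intro ξ hξ
    rw [hS_def] at hξ
    simp only [Set.mem_pi, Set.mem_univ, forall_true_left] at hξ
    intro j
    -- identify the filter set
    have hfilter : (Finset.univ.filter fun k : Fin n =>
        ξ k ∈ Set.Ico ((j : ℝ) / m) (((j : ℝ) + 1) / m))
        = Finset.univ.filter (fun k : Fin n => k.val % m = j.val) := by
      apply Finset.filter_congr
      intro k _
      constructor
      · intro hk
        exact bins_disjoint_aux hmR (hξ k) hk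
      · intro hk
        have h1 := hξ k
        rw [hb_def] at h1
        simp only [hk] at h1
        simpa using h1
    rw [hfilter]
    have hcard := card_filter_mod_eq n m j.val hm0 j.isLt
    set c : ℕ := (Finset.univ.filter fun k : Fin n => k.val % m = j.val).card with hc_def
    have hceil_lo : ((n:ℚ) - (j.val:ℚ)) / (m:ℚ) ≤ (c:ℚ) := by
      have h1 := Int.le_ceil (((n:ℚ) - (j.val:ℚ)) / (m:ℚ))
      rw [← hcard] at h1
      exact_mod_cast h1
    have hceil_hi : (c:ℚ) ≤ ((n:ℚ) - (j.val:ℚ)) / (m:ℚ) + 1 := by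
      have h1 := Int.ceil_lt_add_one (((n:ℚ) - (j.val:ℚ)) / (m:ℚ))
      rw [← hcard] at h1
      have h2 : ((c:ℤ):ℚ) < ((n:ℚ) - (j.val:ℚ)) / (m:ℚ) + 1 := by exact_mod_cast h1
      push_cast at h2 ⊢
      linarith
    -- move to ℝ
    have hmQ : (0:ℚ) < m := by exact_mod_cast hm0
    have hlo : ((n:ℝ) - (j.val:ℝ)) / (m:ℝ) ≤ (c:ℝ) := by exact_mod_cast hceil_lo
    have hhi : (c:ℝ) ≤ ((n:ℝ) - (j.val:ℝ)) / (m:ℝ) + 1 := by exact_mod_cast hceil_hi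
    have hjm : (j.val:ℝ) / m ≤ 1 := by
      rw [div_le_one hmR]
      exact_mod_cast le_of_lt j.isLt
    have hjm0 : (0:ℝ) ≤ (j.val:ℝ) / m := by positivity
    have hsplit : ((n:ℝ) - (j.val:ℝ)) / (m:ℝ) = u - (j.val:ℝ)/m := by
      rw [hu_def]; ring
    rw [hsplit] at hlo hhi
    have hjcast : ((j : Fin m) : ℝ) = (j.val : ℝ) := rfl
    constructor
    · have : (1 - 1 / Real.sqrt 2) * (n:ℝ) / m = (1 - 1 / Real.sqrt 2) * u := by
        rw [hu_def]; ring
      rw [this]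
      nlinarith
    · have : 2 * (n:ℝ) / m = 2 * u := by rw [hu_def]; ring
      rw [this]
      linarith
  exact lt_of_lt_of_le hSpos (measure_mono hsub)
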